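/- (GM-switching, Godsil–McKay.) Let Γ be a finite simple graph and let {C_1, C_2, …, C_k, D} be a partition of its vertex set such that for all i, j ∈ {1,…,k}: (i) any two vertices of C_i have the same number of neighbours in C_j, and (ii) every vertex of D has exactly 0, |C_i|/2 or |C_i| neighbours in C_i. Let Γ' be the graph obtained from Γ by, for each i ∈ {1,…,k}, each u ∈ C_i and each v ∈ D having exactly |C_i|/2 neighbours in C_i, reversing the adjacency between u and v (all other adjacencies unchanged). Then Γ' is cospectral with Γ. -/

import Mathlib

/-- The characteristic polynomial (over `ℤ`) of the adjacency matrix of a finite graph. -/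
noncomputable def graphCharPoly {V : Type*} [Finite V] (G : SimpleGraph V) : Polynomial ℤ :=
  letI := Fintype.ofFinite V
  letI := Classical.decEq V
  letI := Classical.decRel G.Adj
  (SimpleGraph.adjMatrix ℤ G).charpoly

/-- Two finite graphs are cospectral if their adjacency matrices have the same
characteristic polynomial. -/
def Cospectral {V W : Type*} [Finite V] [Finite W]
    (G : SimpleGraph V) (H : SimpleGraph W) : Prop :=
  graphCharPoly G = graphCharPoly H

/-- The number of neighbours of `v` (in the graph `G`) lying in the set `A`. -/
noncomputable def nbrsIn {V : Type*} (G : SimpleGraph V) (v : V) (A : Finset V) : ℕ :=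
  Nat.card {u : V // u ∈ A ∧ G.Adj v u}

/-- The ordered pair `(u, v)` gets switched in GM-switching: `u` lies in some part `C i`
and `v` lies in `D` and has exactly half of `C i` as neighbours. -/
def gmSwitchPair {V : Type*} (G : SimpleGraph V) {k : ℕ}
    (C : Fin k → Finset V) (D : Finset V) (u v : V) : Prop :=
  ∃ i, u ∈ C i ∧ v ∈ D ∧ 2 * nbrsIn G v (C i) = (C i).card

open Finset Matrix Polynomial

section helpers
variable {V : Type*} [Fintype V] [DecidableEq V]

lemma nbrsIn_eq_card (G : SimpleGraph V) [DecidableRel G.Adj] (v : V) (A : Finset V) :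
    nbrsIn G v A = (A.filter (G.Adj v)).card := by
  classical
  rw [nbrsIn, Nat.card_eq_fintype_card, Fintype.card_subtype]
  congr 1
  ext u
  simp [and_comm]

lemma nbrsIn_cast (G : SimpleGraph V) [DecidableRel G.Adj] (v : V) (A : Finset V) :
    (nbrsIn G v A : ℚ) = ∑ x ∈ A, G.adjMatrix ℚ v x := by
  rw [nbrsIn_eq_card, Finset.card_filter]
  push_cast
  simp [SimpleGraph.adjMatrix_apply]

lemma charpoly_conj {n : Type*} [Fintype n] [DecidableEq n] {R : Type*} [CommRing R]
    (Q M : Matrix n n R) (hQ : Q * Q = 1) :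
    (Q * M * Q).charpoly = M.charpoly := by
  have hmap : Q.map (C : R →+* R[X]) * Q.map (C : R →+* R[X]) = 1 := by
    rw [← Matrix.map_mul, hQ]
    simp
  have key : charmatrix (Q * M * Q) =
      Q.map (C : R →+* R[X]) * charmatrix M * Q.map (C : R →+* R[X]) := by
    unfold charmatrix
    rw [Matrix.mul_sub, Matrix.sub_mul]
    congr 1
    · rw [← (Matrix.scalar_commute (X : R[X]) (Commute.all _) (Q.map C)).eq,
        Matrix.mul_assoc, hmap, mul_one]
    · simp [RingHom.mapMatrix_apply, Matrix.map_mul]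
  rw [Matrix.charpoly, key, det_mul, det_mul, Matrix.charpoly]
  have : det (Q.map (C : R →+* R[X])) * det (Q.map (C : R →+* R[X])) = 1 := by
    rw [← det_mul, hmap, det_one]
  ring_nf
  rw [sq, this, one_mul]

lemma charpoly_rat_inj (G H : SimpleGraph V) [DecidableRel G.Adj] [DecidableRel H.Adj]
    (h : (G.adjMatrix ℚ).charpoly = (H.adjMatrix ℚ).charpoly) :
    (G.adjMatrix ℤ).charpoly = (H.adjMatrix ℤ).charpoly := by
  apply Polynomial.map_injective (Int.castRingHom ℚ) Int.cast_injective
  rw [← Matrix.charpoly_map, ← Matrix.charpoly_map]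
  have e1 : (G.adjMatrix ℤ).map (Int.castRingHom ℚ) = G.adjMatrix ℚ := by
    ext u v; simp [SimpleGraph.adjMatrix_apply, apply_ite]
  have e2 : (H.adjMatrix ℤ).map (Int.castRingHom ℚ) = H.adjMatrix ℚ := by
    ext u v; simp [SimpleGraph.adjMatrix_apply, apply_ite]
  rw [e1, e2, h]

end helpers


/-- **GM-switching** (Godsil–McKay). If `{C 1, …, C k, D}` is a partition of the vertex
set of `Γ` such that (i) any two vertices of `C i` have the same number of neighbours in
`C j`, and (ii) every vertex of `D` has exactly `0`, `|C i|/2` or `|C i|` neighbours in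
`C i`, then the graph `Γ'` obtained by reversing the adjacency between every `u ∈ C i`
and every `v ∈ D` having exactly `|C i|/2` neighbours in `C i` is cospectral with `Γ`. -/
theorem gm_switching {V : Type*} [Finite V] (Γ Γ' : SimpleGraph V)
    (k : ℕ) (C : Fin k → Finset V) (D : Finset V)
    (hCD : ∀ i, Disjoint (C i) D)
    (hCC : ∀ i j, i ≠ j → Disjoint (C i) (C j))
    (hcover : ∀ v : V, v ∈ D ∨ ∃ i, v ∈ C i)
    (hi : ∀ i j : Fin k, ∀ u ∈ C i, ∀ u' ∈ C i,
      nbrsIn Γ u (C j) = nbrsIn Γ u' (C j))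
    (hii : ∀ v ∈ D, ∀ i, nbrsIn Γ v (C i) = 0 ∨
      2 * nbrsIn Γ v (C i) = (C i).card ∨ nbrsIn Γ v (C i) = (C i).card)
    (hΓ' : ∀ u v : V, Γ'.Adj u v ↔
      (((gmSwitchPair Γ C D u v ∨ gmSwitchPair Γ C D v u) ∧ ¬ Γ.Adj u v) ∨
       (¬ (gmSwitchPair Γ C D u v ∨ gmSwitchPair Γ C D v u) ∧ Γ.Adj u v))) :
    Cospectral Γ Γ' := by
  letI : Fintype V := Fintype.ofFinite V
  letI : DecidableEq V := Classical.decEq V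
  letI dG : DecidableRel Γ.Adj := Classical.decRel Γ.Adj
  letI dG' : DecidableRel Γ'.Adj := Classical.decRel Γ'.Adj
  classical
  -- part uniqueness facts
  have huniq : ∀ {u : V} {i j : Fin k}, u ∈ C i → u ∈ C j → i = j := by
    intro u i j h1 h2
    by_contra h
    exact Finset.disjoint_left.mp (hCC i j h) h1 h2
  have hnotD : ∀ {u : V} {i : Fin k}, u ∈ C i → u ∉ D := by
    intro u i hu
    exact Finset.disjoint_left.mp (hCD i) hu
  have hDnotC : ∀ {u : V}, u ∈ D → ¬ ∃ i, u ∈ C i := by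
    rintro u hu ⟨i, hi'⟩
    exact hnotD hi' hu
  -- the switching matrix
  set q : Fin k → ℚ := fun i => 2 / ((C i).card : ℚ) with hqdef
  set Q : Matrix V V ℚ := Matrix.of (fun u x =>
    (∑ i, if u ∈ C i ∧ x ∈ C i then q i else 0)
    + (if ∃ i, u ∈ C i then -1 else 1) * (if u = x then 1 else 0)) with hQdef
  have hcQ : ∀ {i : Fin k} {u : V}, u ∈ C i → ((C i).card : ℚ) ≠ 0 := by
    intro i u hu
    exact_mod_cast Finset.card_ne_zero_of_mem hu
  have hqc : ∀ {i : Fin k} {u : V}, u ∈ C i → q i * ((C i).card : ℚ) = 2 := by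
    intro i u hu
    simp only [hqdef]
    exact div_mul_cancel₀ 2 (hcQ hu)
  -- row lemmas for Q
  have hQD : ∀ {u : V}, u ∈ D → ∀ x, Q u x = if u = x then 1 else 0 := by
    intro u hu x
    have h1 : ∀ i : Fin k, ¬ (u ∈ C i ∧ x ∈ C i) := fun i h => hnotD h.1 hu
    simp only [hQdef, Matrix.of_apply]
    rw [Finset.sum_eq_zero (fun i _ => if_neg (h1 i)), if_neg (hDnotC hu)]
    ring
  have hQC : ∀ {u : V} {i : Fin k}, u ∈ C i → ∀ x,
      Q u x = (if x ∈ C i then q i else 0) - (if u = x then 1 else 0) := by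
    intro u i hu x
    simp only [hQdef, Matrix.of_apply]
    have hex : ∃ j, u ∈ C j := ⟨i, hu⟩
    rw [Finset.sum_eq_single i
      (fun j _ hj => if_neg (fun h => hj (huniq h.1 hu)))
      (fun h => absurd (Finset.mem_univ i) h), if_pos hex]
    by_cases hx : x ∈ C i <;> simp [hx, hu] <;> split_ifs <;> ring
  -- Q is an involution
  have hQQ : Q * Q = 1 := by
    ext u v
    rw [Matrix.mul_apply, Matrix.one_apply]
    rcases hcover u with hu | ⟨i, hu⟩
    · have h1 : ∀ x, Q u x * Q x v = if u = x then Q x v else 0 := by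
        intro x
        rw [hQD hu x]
        by_cases h : u = x <;> simp [h]
      simp_rw [h1]
      rw [Finset.sum_ite_eq Finset.univ u (fun x => Q x v)]
      simp only [Finset.mem_univ, if_true]
      rw [hQD hu v]
    · have h1 : ∀ x, Q u x * Q x v =
          (if x ∈ C i then q i * Q x v else 0) - (if u = x then Q x v else 0) := by
        intro x
        rw [hQC hu x]
        simp only [sub_mul, ite_mul, zero_mul, one_mul]
      simp_rw [h1]
      rw [Finset.sum_sub_distrib,
        Finset.sum_ite_eq Finset.univ u (fun x => Q x v)]
      simp only [Finset.mem_univ, if_true]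
      have t1 : ∑ x, (if x ∈ C i then q i * Q x v else 0) = q i * ∑ x ∈ C i, Q x v := by
        rw [← Finset.sum_filter, Finset.filter_mem_eq_inter, Finset.univ_inter, Finset.mul_sum]
      have t3 : ∑ x ∈ C i, Q x v = if v ∈ C i then 1 else 0 := by
        rw [Finset.sum_congr rfl (fun x hx => hQC hx v), Finset.sum_sub_distrib,
          Finset.sum_const]
        have : ∑ x ∈ C i, (if x = v then (1:ℚ) else 0) = if v ∈ C i then 1 else 0 := by
          simp [Finset.sum_ite_eq']
        rw [this]
        by_cases hv : v ∈ C i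
        · rw [if_pos hv, if_pos hv, nsmul_eq_mul, mul_comm, hqc hu]
          norm_num
        · rw [if_neg hv, if_neg hv]
          simp
      rw [t1, t3, hQC hu v]
      by_cases hv : v ∈ C i <;> by_cases huv : u = v <;> simp [hv, huv]
  -- symmetry of adjacency matrices
  have hAsymm : ∀ x y, Γ.adjMatrix ℚ x y = Γ.adjMatrix ℚ y x := by
    intro x y
    simp [SimpleGraph.adjMatrix_apply, SimpleGraph.adj_comm]
  have hA'symm : ∀ x y, Γ'.adjMatrix ℚ x y = Γ'.adjMatrix ℚ y x := by
    intro x y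
    simp [SimpleGraph.adjMatrix_apply, SimpleGraph.adj_comm]
  -- column lemmas for A * Q
  have hAQD : ∀ v ∈ D, ∀ x, (Γ.adjMatrix ℚ * Q) x v = Γ.adjMatrix ℚ x v := by
    intro v hv x
    rw [Matrix.mul_apply]
    have h1 : ∀ y, Γ.adjMatrix ℚ x y * Q y v = if y = v then Γ.adjMatrix ℚ x y else 0 := by
      intro y
      rcases hcover y with hy | ⟨j, hy⟩
      · rw [hQD hy v]
        simp only [mul_ite, mul_one, mul_zero]
      · have hyv : y ≠ v := fun h => hnotD (h ▸ hy) hv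
        have hvC : v ∉ C j := fun h => hnotD h hv
        rw [hQC hy v]
        simp only [if_neg hvC, if_neg hyv]
        ring
    simp_rw [h1]
    simp [Finset.sum_ite_eq']
  have hAQC : ∀ (j : Fin k), ∀ v ∈ C j, ∀ x,
      (Γ.adjMatrix ℚ * Q) x v = q j * (nbrsIn Γ x (C j) : ℚ) - Γ.adjMatrix ℚ x v := by
    intro j v hv x
    rw [Matrix.mul_apply]
    have h1 : ∀ y, Γ.adjMatrix ℚ x y * Q y v =
        (if y ∈ C j then q j * Γ.adjMatrix ℚ x y else 0)
        - (if y = v then Γ.adjMatrix ℚ x y else 0) := by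
      intro y
      have hy : Q y v = (if y ∈ C j then q j else 0) - (if y = v then 1 else 0) := by
        rcases hcover y with hy | ⟨i, hy⟩
        · have hyv : y ≠ v := fun h => hDnotC hy ⟨j, h ▸ hv⟩
          have hyC : y ∉ C j := fun h => hDnotC hy ⟨j, h⟩
          rw [hQD hy v]
          simp only [if_neg hyv, if_neg hyC]
          ring
        · rw [hQC hy v]
          by_cases hij : i = j
          · subst hij
            rw [if_pos hv, if_pos hy]
          · have hvC : v ∉ C i := fun h => hij (huniq h hv)
            have hyC : y ∉ C j := fun h => hij (huniq hy h)
            rw [if_neg hvC, if_neg hyC]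
      rw [hy]
      simp only [mul_sub, mul_ite, mul_zero, mul_one, mul_comm (Γ.adjMatrix ℚ x y) (q j)]
    simp_rw [h1]
    rw [Finset.sum_sub_distrib]
    congr 1
    · rw [← Finset.sum_filter, Finset.filter_mem_eq_inter, Finset.univ_inter, ← Finset.mul_sum,
        nbrsIn_cast]
    · simp [Finset.sum_ite_eq']
  -- value of A' in terms of switching
  have hsw : ∀ u v, Γ'.adjMatrix ℚ u v =
      if (gmSwitchPair Γ C D u v ∨ gmSwitchPair Γ C D v u)
      then 1 - Γ.adjMatrix ℚ u v else Γ.adjMatrix ℚ u v := by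
    intro u v
    by_cases hs : (gmSwitchPair Γ C D u v ∨ gmSwitchPair Γ C D v u)
    · have hiff : Γ'.Adj u v ↔ ¬ Γ.Adj u v := by rw [hΓ' u v]; tauto
      rw [if_pos hs]
      by_cases hA : Γ.Adj u v <;> simp [SimpleGraph.adjMatrix_apply, hiff, hA]
    · have hiff : Γ'.Adj u v ↔ Γ.Adj u v := by rw [hΓ' u v]; tauto
      rw [if_neg hs]
      by_cases hA : Γ.Adj u v <;> simp [SimpleGraph.adjMatrix_apply, hiff, hA]
  -- switch pair characterizations
  have hswDD : ∀ u ∈ D, ∀ v ∈ D,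
      ¬ (gmSwitchPair Γ C D u v ∨ gmSwitchPair Γ C D v u) := by
    rintro u hu v hv (⟨i, h1, _⟩ | ⟨i, h1, _⟩)
    · exact hnotD h1 hu
    · exact hnotD h1 hv
  have hswDC : ∀ u ∈ D, ∀ (j : Fin k), ∀ v ∈ C j,
      ((gmSwitchPair Γ C D u v ∨ gmSwitchPair Γ C D v u) ↔
        2 * nbrsIn Γ u (C j) = (C j).card) := by
    intro u hu j v hv
    constructor
    · rintro (⟨i, h1, _⟩ | ⟨i, h1, h2, h3⟩)
      · exact absurd h1 (fun h => hnotD h hu)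
      · rwa [huniq hv h1]
    · intro h
      exact Or.inr ⟨j, hv, hu, h⟩
  have hswCC : ∀ (i : Fin k), ∀ u ∈ C i, ∀ (j : Fin k), ∀ v ∈ C j,
      ¬ (gmSwitchPair Γ C D u v ∨ gmSwitchPair Γ C D v u) := by
    rintro i u hu j v hv (⟨i', _, h2, _⟩ | ⟨i', _, h2, _⟩)
    · exact hnotD hv h2
    · exact hnotD hu h2
  -- key mixed-case computation
  have key : ∀ u ∈ D, ∀ (j : Fin k), ∀ v ∈ C j,
      q j * (nbrsIn Γ u (C j) : ℚ) - Γ.adjMatrix ℚ u v = Γ'.adjMatrix ℚ u v := by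
    intro u hu j v hv
    have hcj : ((C j).card : ℚ) ≠ 0 := hcQ hv
    have hcjn : (C j).card ≠ 0 := Finset.card_ne_zero_of_mem hv
    rw [hsw u v]
    rcases hii u hu j with h0 | h2 | hc
    · have hsF : ¬ (gmSwitchPair Γ C D u v ∨ gmSwitchPair Γ C D v u) := by
        rw [hswDC u hu j v hv, h0]
        omega
      have hA0 : Γ.adjMatrix ℚ u v = 0 := by
        have hna : ¬ Γ.Adj u v := by
          intro hadj
          have hmem : v ∈ (C j).filter (Γ.Adj u) := Finset.mem_filter.mpr ⟨hv, hadj⟩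
          rw [nbrsIn_eq_card, Finset.card_eq_zero] at h0
          rw [h0] at hmem
          exact absurd hmem (Finset.notMem_empty v)
        simp [SimpleGraph.adjMatrix_apply, hna]
      rw [if_neg hsF, hA0, h0]
      simp
    · have hsT : (gmSwitchPair Γ C D u v ∨ gmSwitchPair Γ C D v u) := by
        rw [hswDC u hu j v hv]
        exact h2
      rw [if_pos hsT]
      have : q j * (nbrsIn Γ u (C j) : ℚ) = 1 := by
        rw [hqdef]
        have h2' : (2 : ℚ) * (nbrsIn Γ u (C j) : ℚ) = ((C j).card : ℚ) := by
          exact_mod_cast h2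
        field_simp
        linarith
      rw [this]
    · have hsF : ¬ (gmSwitchPair Γ C D u v ∨ gmSwitchPair Γ C D v u) := by
        rw [hswDC u hu j v hv, hc]
        omega
      have hA1 : Γ.adjMatrix ℚ u v = 1 := by
        have hadj : Γ.Adj u v := by
          rw [nbrsIn_eq_card] at hc
          have hfe : (C j).filter (Γ.Adj u) = C j :=
            Finset.eq_of_subset_of_card_le (Finset.filter_subset _ _) (le_of_eq hc.symm)
          have : v ∈ (C j).filter (Γ.Adj u) := by rw [hfe]; exact hv
          exact (Finset.mem_filter.mp this).2
        simp [SimpleGraph.adjMatrix_apply, hadj]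
      rw [if_neg hsF, hA1]
      have : q j * (nbrsIn Γ u (C j) : ℚ) = 2 := by
        rw [hc]
        exact hqc hv
      rw [this]
      norm_num
  -- the conjugation identity
  have main : Q * Γ.adjMatrix ℚ * Q = Γ'.adjMatrix ℚ := by
    rw [Matrix.mul_assoc]
    ext u v
    rw [Matrix.mul_apply]
    rcases hcover u with hu | ⟨i, hu⟩
    · -- u ∈ D
      have h1 : ∀ x, Q u x * (Γ.adjMatrix ℚ * Q) x v =
          if u = x then (Γ.adjMatrix ℚ * Q) x v else 0 := by
        intro x
        rw [hQD hu x]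
        simp only [ite_mul, one_mul, zero_mul]
      simp_rw [h1]
      rw [Finset.sum_ite_eq Finset.univ u]
      simp only [Finset.mem_univ, if_true]
      rcases hcover v with hv | ⟨j, hv⟩
      · rw [hAQD v hv u, hsw u v, if_neg (hswDD u hu v hv)]
      · rw [hAQC j v hv u]
        exact key u hu j v hv
    · -- u ∈ C i
      have h1 : ∀ x, Q u x * (Γ.adjMatrix ℚ * Q) x v =
          (if x ∈ C i then q i * (Γ.adjMatrix ℚ * Q) x v else 0)
          - (if u = x then (Γ.adjMatrix ℚ * Q) x v else 0) := by
        intro x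
        rw [hQC hu x]
        simp only [sub_mul, ite_mul, zero_mul, one_mul]
      simp_rw [h1]
      rw [Finset.sum_sub_distrib, Finset.sum_ite_eq Finset.univ u]
      simp only [Finset.mem_univ, if_true]
      rw [← Finset.sum_filter, Finset.filter_mem_eq_inter, Finset.univ_inter, ← Finset.mul_sum]
      rcases hcover v with hv | ⟨j, hv⟩
      · -- v ∈ D
        have e1 : ∑ x ∈ C i, (Γ.adjMatrix ℚ * Q) x v = (nbrsIn Γ v (C i) : ℚ) := by
          rw [Finset.sum_congr rfl (fun x hx => hAQD v hv x), nbrsIn_cast]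
          exact Finset.sum_congr rfl (fun x hx => hAsymm x v)
        rw [e1, hAQD v hv u]
        have := key v hv i u hu
        rw [hAsymm u v, hA'symm u v]
        rw [← this, hAsymm v u]
      · -- v ∈ C j
        have hci : ((C i).card : ℚ) ≠ 0 := hcQ hu
        have hcj : ((C j).card : ℚ) ≠ 0 := hcQ hv
        set n : ℚ := (nbrsIn Γ u (C j) : ℚ) with hn
        set m : ℚ := (nbrsIn Γ v (C i) : ℚ) with hm
        have e1 : ∑ x ∈ C i, (Γ.adjMatrix ℚ * Q) x v
            = ((C i).card : ℚ) * (q j * n) - m := by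
          rw [Finset.sum_congr rfl (fun x hx => hAQC j v hv x), Finset.sum_sub_distrib]
          congr 1
          · rw [Finset.sum_congr rfl
              (fun x hx => by rw [hi i j x hx u hu] : ∀ x ∈ C i,
                q j * (nbrsIn Γ x (C j) : ℚ) = q j * n),
              Finset.sum_const, nsmul_eq_mul]
          · rw [hm, nbrsIn_cast]
            exact Finset.sum_congr rfl (fun x hx => hAsymm x v)
        have hdc : ((C i).card : ℚ) * n = ((C j).card : ℚ) * m := by
          have l1 : ((C i).card : ℚ) * n = ∑ x ∈ C i, ∑ y ∈ C j, Γ.adjMatrix ℚ x y := by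
            rw [Finset.sum_congr rfl (fun x hx => by
              rw [← nbrsIn_cast, hi i j x hx u hu]), Finset.sum_const, nsmul_eq_mul]
          have l2 : ((C j).card : ℚ) * m = ∑ y ∈ C j, ∑ x ∈ C i, Γ.adjMatrix ℚ y x := by
            rw [Finset.sum_congr rfl (fun y hy => by
              rw [← nbrsIn_cast, hi j i y hy v hv]), Finset.sum_const, nsmul_eq_mul]
          rw [l1, l2]; refine Finset.sum_comm.trans ?_
          exact Finset.sum_congr rfl (fun y _ => Finset.sum_congr rfl
            (fun x _ => hAsymm x y))
        rw [e1, hAQC j v hv u, hsw u v, if_neg (hswCC i u hu j v hv)]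
        have hqi : q i * ((C i).card : ℚ) = 2 := hqc hu
        have hqj : q j * ((C j).card : ℚ) = 2 := hqc hv
        have hqm : q i * m = q j * n := by
          rw [hqdef]
          field_simp
          linarith [hdc]
        calc q i * (((C i).card : ℚ) * (q j * n) - m)
              - (q j * n - Γ.adjMatrix ℚ u v)
            = (q i * ((C i).card : ℚ)) * (q j * n) - q i * m - q j * n
              + Γ.adjMatrix ℚ u v := by ring
          _ = Γ.adjMatrix ℚ u v := by rw [hqi, hqm]; ring
  -- conclude
  have hrat : (Γ.adjMatrix ℚ).charpoly = (Γ'.adjMatrix ℚ).charpoly := by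
    rw [← main, charpoly_conj _ _ hQQ]
  unfold Cospectral graphCharPoly
  exact charpoly_rat_inj Γ Γ' hrat
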